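/- Let W be a finite reflection group on V, ℓ a prime, S a Sylow ℓ-subgroup of W, and P a parabolic subgroup of W minimally containing S. If H is any subgroup of W with S ≤ H ≤ P, then the normalizer of H in W is contained in the normalizer of P in W: N_W(H) ≤ N_W(P). In particular, N_W(S) ≤ N_W(P). -/

import Mathlib

variable {V : Type*} [AddCommGroup V] [Module ℂ V] [FiniteDimensional ℂ V]

/-- A reflection on `V`: an invertible linear endomorphism of finite order, not the identity,
whose fixed-point subspace contains a hyperplane (codimension-one subspace) of `V`. -/
def IsReflection (g : (V →ₗ[ℂ] V)ˣ) : Prop :=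
  g ≠ 1 ∧ IsOfFinOrder g ∧
    ∃ H : Submodule ℂ V, Module.finrank ℂ (V ⧸ H) = 1 ∧ ∀ v ∈ H, g.val v = v

/-- The pointwise stabilizer of a subspace `U ⊆ V` inside the group of invertible linear
endomorphisms of `V`. -/
def pointStab (U : Submodule ℂ V) : Subgroup (V →ₗ[ℂ] V)ˣ where
  carrier := {g | ∀ u ∈ U, g.val u = u}
  one_mem' := fun u _ => rfl
  mul_mem' := by
    intro a b ha hb u hu
    have h : (a * b).val u = a.val (b.val u) := rfl
    rw [h, hb u hu, ha u hu]
  inv_mem' := by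
    intro a ha u hu
    have h1 : a⁻¹.val (a.val u) = u := by
      have h2 : (a⁻¹ * a).val u = u := by rw [inv_mul_cancel a]; rfl
      exact h2
    calc a⁻¹.val u = a⁻¹.val (a.val u) := by rw [ha u hu]
      _ = u := h1

/-- `P` is a parabolic subgroup of `W`: the pointwise stabilizer in `W` of some subspace of `V`. -/
def IsParabolic (W P : Subgroup (V →ₗ[ℂ] V)ˣ) : Prop :=
  ∃ U : Submodule ℂ V, P = W ⊓ pointStab U

/-- `P` minimally contains the subgroup `K` among the parabolic subgroups of `W`. -/
def MinimallyContains (W P K : Subgroup (V →ₗ[ℂ] V)ˣ) : Prop :=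
  IsParabolic W P ∧ K ≤ P ∧ ∀ Q : Subgroup (V →ₗ[ℂ] V)ˣ, IsParabolic W Q → K ≤ Q → ¬ Q < P

lemma mem_pointStab {U : Submodule ℂ V} {g : (V →ₗ[ℂ] V)ˣ} :
    g ∈ pointStab U ↔ ∀ u ∈ U, g.val u = u := Iff.rfl

lemma pointStab_sup (U U' : Submodule ℂ V) :
    pointStab (U ⊔ U') = pointStab U ⊓ pointStab U' := by
  ext g
  simp only [Subgroup.mem_inf, mem_pointStab]
  constructor
  · intro h
    exact ⟨fun u hu => h u (Submodule.mem_sup_left hu),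
           fun u hu => h u (Submodule.mem_sup_right hu)⟩
  · rintro ⟨h1, h2⟩ v hv
    obtain ⟨u, hu, u', hu', rfl⟩ := Submodule.mem_sup.mp hv
    rw [map_add, h1 u hu, h2 u' hu']

lemma key_lemma (W P K H : Subgroup (V →ₗ[ℂ] V)ˣ)
    (hmin : MinimallyContains W P K) (hKH : K ≤ H) (hHP : H ≤ P) :
    W ⊓ Subgroup.normalizer (H : Set (V →ₗ[ℂ] V)ˣ) ≤ W ⊓ Subgroup.normalizer (P : Set (V →ₗ[ℂ] V)ˣ) := by
  obtain ⟨⟨U, hU⟩, hKP, hminb⟩ := hmin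
  have aux : ∀ n ∈ W ⊓ Subgroup.normalizer (H : Set (V →ₗ[ℂ] V)ˣ), ∀ x ∈ P, n⁻¹ * x * n ∈ P := by
    rintro n hn x hx
    obtain ⟨hnW, hnH⟩ := Subgroup.mem_inf.mp hn
    set U' : Submodule ℂ V := U.map (n.val : V →ₗ[ℂ] V) with hU'
    set Q : Subgroup (V →ₗ[ℂ] V)ˣ := W ⊓ pointStab (U ⊔ U') with hQ
    have hQP : Q = P ⊓ (W ⊓ pointStab U') := by
      rw [hQ, hU, pointStab_sup, inf_inf_distrib_left]
    have hKQ : K ≤ Q := by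
      intro k hk
      rw [hQ, Subgroup.mem_inf]
      have hkP : k ∈ P := hKP hk
      rw [hU, Subgroup.mem_inf] at hkP
      refine ⟨hkP.1, ?_⟩
      rw [pointStab_sup, Subgroup.mem_inf]
      refine ⟨hkP.2, ?_⟩
      intro v hv
      obtain ⟨u, hu, rfl⟩ := Submodule.mem_map.mp hv
      -- k ∈ H, n normalizes H, so n⁻¹ * k * n ∈ H ≤ P fixes U pointwise
      have hk' : n⁻¹ * k * n ∈ H := by
        have := (Subgroup.mem_normalizer_iff.mp (inv_mem hnH) k).mp (hKH hk)
        simpa using this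
      have hk'P : n⁻¹ * k * n ∈ P := hHP hk'
      rw [hU, Subgroup.mem_inf] at hk'P
      have hfix : (n⁻¹ * k * n).val u = u := hk'P.2 u hu
      have hval : (n⁻¹ * k * n).val u = n⁻¹.val (k.val (n.val u)) := rfl
      rw [hval] at hfix
      have := congrArg (fun w => n.val w) hfix
      have hnn : n.val (n⁻¹.val (k.val (n.val u))) = k.val (n.val u) := by
        have h2 : (n * n⁻¹).val (k.val (n.val u)) = k.val (n.val u) := by
          rw [mul_inv_cancel n]; rfl
        exact h2
      rw [hnn] at this
      exact this
    have hQleP : Q ≤ P := by rw [hQP]; exact inf_le_left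
    have hQeqP : Q = P := by
      by_contra hne
      exact hminb Q ⟨U ⊔ U', rfl⟩ hKQ (lt_of_le_of_ne hQleP hne)
    -- Now x ∈ P = Q ≤ pointStab U', so x fixes n·U pointwise; hence n⁻¹xn fixes U.
    have hxQ : x ∈ Q := hQeqP ▸ hx
    rw [hQP, Subgroup.mem_inf, Subgroup.mem_inf] at hxQ
    rw [hU, Subgroup.mem_inf]
    constructor
    · exact mul_mem (mul_mem (inv_mem hnW) ((hU ▸ hx : x ∈ W ⊓ pointStab U).1)) hnW
    · intro u hu
      have hfix : x.val (n.val u) = n.val u :=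
        hxQ.2.2 (n.val u) (Submodule.mem_map_of_mem hu)
      have hval : (n⁻¹ * x * n).val u = n⁻¹.val (x.val (n.val u)) := rfl
      rw [hval, hfix]
      have h2 : (n⁻¹ * n).val u = u := by rw [inv_mul_cancel n]; rfl
      exact h2
  rintro n hn
  obtain ⟨hnW, hnH⟩ := Subgroup.mem_inf.mp hn
  refine Subgroup.mem_inf.mpr ⟨hnW, Subgroup.mem_normalizer_iff.mpr fun x => ⟨?_, ?_⟩⟩
  · intro hx
    have := aux n⁻¹ (Subgroup.mem_inf.mpr ⟨inv_mem hnW, inv_mem hnH⟩) x hx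
    simpa using this
  · intro hx
    have := aux n hn _ hx
    have h2 : n⁻¹ * (n * x * n⁻¹) * n = x := by group
    rwa [h2] at this

/-- Let `W` be a finite reflection group on `V`, `ℓ` a prime, `S` a Sylow
`ℓ`-subgroup of `W`, and `P` a parabolic subgroup of `W` minimally containing `S`. If `H` is
any subgroup with `S ≤ H ≤ P`, then `N_W(H) ≤ N_W(P)`; in particular `N_W(S) ≤ N_W(P)`. -/
theorem stmt5 (ℓ : ℕ) (hℓ : ℓ.Prime) (W : Subgroup (V →ₗ[ℂ] V)ˣ) (hWfin : Finite W)
    (hW : W = Subgroup.closure {g : (V →ₗ[ℂ] V)ˣ | IsReflection g ∧ g ∈ W})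
    (S : Sylow ℓ W) (P H : Subgroup (V →ₗ[ℂ] V)ˣ)
    (hP : MinimallyContains W P (Subgroup.map W.subtype (S : Subgroup W)))
    (hSH : Subgroup.map W.subtype (S : Subgroup W) ≤ H) (hHP : H ≤ P) :
    (W ⊓ Subgroup.normalizer (H : Set (V →ₗ[ℂ] V)ˣ) ≤ W ⊓ Subgroup.normalizer (P : Set (V →ₗ[ℂ] V)ˣ)) ∧
      W ⊓ Subgroup.normalizer ((Subgroup.map W.subtype (S : Subgroup W)) : Set (V →ₗ[ℂ] V)ˣ) ≤
        W ⊓ Subgroup.normalizer (P : Set (V →ₗ[ℂ] V)ˣ) := by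
  exact ⟨key_lemma W P _ H hP hSH hHP,
         key_lemma W P _ _ hP le_rfl hP.2.1⟩
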